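/- For 1 ≤ i < r, the family L_i consisting of all subsets X of [r] such that X does not lie in any interval [{1,...,j}, complement of {j+1}] for 1 ≤ j ≤ i (i.e., for every j with 1 ≤ j ≤ i, it is not the case that {1,...,j} ⊆ X and j+1 ∉ X) is closed under unions and intersections, contains ∅ and [r], and has exactly (1/2 + 1/2^{i+1})·2^r = 2^{r-1} + 2^{r-i-1} members. -/

import Mathlib

/-- For `1 ≤ i < r`, the family of subsets of `[r]` avoiding all intervals
`[{1,…,j}, complement of {j+1}]` for `1 ≤ j ≤ i` is a sublattice of the
powerset containing `∅` and `[r]`, and has `2^(r-1) + 2^(r-i-1)` members.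
(Here `[r]` is `Fin r` with `0`-based labels: the `1`-based element `m`
corresponds to the `Fin r` element with value `m - 1`.) -/
theorem stmt_4 {r i : ℕ} (h1 : 1 ≤ i) (h2 : i < r)
    (L : Set (Finset (Fin r)))
    (hL : L = {X | ∀ (j : ℕ) (_ : 1 ≤ j) (hji : j ≤ i),
      ¬((∀ k : Fin r, (k : ℕ) < j → k ∈ X) ∧
        (⟨j, lt_of_le_of_lt hji h2⟩ : Fin r) ∉ X)}) :
    (∀ X ∈ L, ∀ Y ∈ L, X ∪ Y ∈ L ∧ X ∩ Y ∈ L) ∧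
    ∅ ∈ L ∧ Finset.univ ∈ L ∧
    L.ncard = 2 ^ (r - 1) + 2 ^ (r - i - 1) := by
  have hr : 0 < r := by omega
  set a : Fin r := ⟨0, hr⟩ with ha
  have key : ∀ X : Finset (Fin r),
      X ∈ L ↔ (a ∉ X ∨ ∀ k : Fin r, (k : ℕ) ≤ i → k ∈ X) := by
    intro X
    rw [hL]
    simp only [Set.mem_setOf_eq]
    constructor
    · intro h
      by_cases haX : a ∈ X
      · right
        have main : ∀ m : ℕ, m ≤ i → ∀ hm : m < r, (⟨m, hm⟩ : Fin r) ∈ X := by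
          intro m
          induction m using Nat.strong_induction_on with
          | _ m ih =>
            intro hmi hm
            match m with
            | 0 => exact haX
            | (j+1) =>
              have hc := h (j+1) (by omega) hmi
              by_contra hnot
              exact hc ⟨fun k hk => by
                have := ih k.val hk (by omega) k.isLt
                simpa using this, by simpa using hnot⟩
        intro k hk
        have := main k.val hk k.isLt
        simpa using this
      · exact Or.inl haX
    · intro h j hj hji hc
      rcases h with h | h
      · exact h (hc.1 a (by simp [ha]; omega))
      · exact hc.2 (h _ (by simpa using hji))
  refine ⟨?_, ?_, ?_, ?_⟩
  · intro X hX Y hY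
    rw [key] at hX hY
    constructor
    · rw [key]
      rcases hX with hX | hX
      · rcases hY with hY | hY
        · exact Or.inl (by simp [hX, hY])
        · exact Or.inr fun k hk => Finset.mem_union_right _ (hY k hk)
      · exact Or.inr fun k hk => Finset.mem_union_left _ (hX k hk)
    · rw [key]
      rcases hX with hX | hX
      · exact Or.inl fun hm => hX (Finset.mem_of_mem_inter_left hm)
      · rcases hY with hY | hY
        · exact Or.inl fun hm => hY (Finset.mem_of_mem_inter_right hm)
        · exact Or.inr fun k hk => Finset.mem_inter.2 ⟨hX k hk, hY k hk⟩
  · rw [key]; exact Or.inl (by simp)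
  · rw [key]; exact Or.inr fun k _ => Finset.mem_univ k
  · set S : Finset (Fin r) := Finset.Iic ⟨i, h2⟩ with hSdef
    have hSmem : ∀ k : Fin r, k ∈ S ↔ (k : ℕ) ≤ i := by
      intro k; simp [hSdef, Fin.le_def]
    have haS : a ∈ S := by rw [hSmem]; simp [ha]
    have hScard : S.card = i + 1 := Fin.card_Iic _
    set A : Finset (Finset (Fin r)) := (Finset.univ.erase a).powerset with hA
    set B : Finset (Finset (Fin r)) :=
      ((Finset.univ \ S).powerset).image (fun T => S ∪ T) with hB
    have hmemA : ∀ X, X ∈ A ↔ a ∉ X := by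
      intro X
      simp [hA, Finset.subset_erase]
    have hmemB : ∀ X, X ∈ B ↔ S ⊆ X := by
      intro X
      simp only [hB, Finset.mem_image, Finset.mem_powerset]
      constructor
      · rintro ⟨T, _, rfl⟩
        exact Finset.subset_union_left
      · intro hSX
        exact ⟨X \ S, by
          intro x hx
          simp only [Finset.mem_sdiff] at hx ⊢
          exact ⟨Finset.mem_univ _, hx.2⟩,
          Finset.union_sdiff_of_subset hSX⟩
    have hLeq : L = ↑(A ∪ B) := by
      ext X
      rw [key, Finset.coe_union, Set.mem_union, Finset.mem_coe, Finset.mem_coe,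
        hmemA, hmemB]
      constructor
      · rintro (h | h)
        · exact Or.inl h
        · exact Or.inr fun k hk => h k ((hSmem k).1 hk)
      · rintro (h | h)
        · exact Or.inl h
        · exact Or.inr fun k hk => h ((hSmem k).2 hk)
    have hdisj : Disjoint A B := by
      rw [Finset.disjoint_left]
      intro X hXA hXB
      exact ((hmemA X).1 hXA) (((hmemB X).1 hXB) haS)
    have hAcard : A.card = 2 ^ (r - 1) := by
      rw [hA, Finset.card_powerset, Finset.card_erase_of_mem (Finset.mem_univ _),
        Finset.card_univ, Fintype.card_fin]
    have hBcard : B.card = 2 ^ (r - i - 1) := by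
      rw [hB, Finset.card_image_of_injOn, Finset.card_powerset, Finset.card_sdiff_of_subset
        (Finset.subset_univ _), Finset.card_univ, Fintype.card_fin, hScard]
      · congr 1
      · intro T1 h1' T2 h2' he
        simp only [Finset.mem_coe, Finset.mem_powerset] at h1' h2'
        have d1 : Disjoint S T1 := by
          rw [Finset.disjoint_left]; intro x hx hx'
          exact ((Finset.mem_sdiff.1 (h1' hx')).2) hx
        have d2 : Disjoint S T2 := by
          rw [Finset.disjoint_left]; intro x hx hx'
          exact ((Finset.mem_sdiff.1 (h2' hx')).2) hx
        have he' : S ∪ T1 = S ∪ T2 := he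
        rw [← Finset.union_sdiff_cancel_left d1, ← Finset.union_sdiff_cancel_left d2, he']
    rw [hLeq, Set.ncard_coe_finset, Finset.card_union_of_disjoint hdisj, hAcard, hBcard]
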